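/- Under the conditional independence assumption Z ⟂ R | (Y, A), the propensity score satisfies f(R=1 | a, y) = f(R=1 | a, y, z) = f(R=1 | a, y₁) / ( f(R=1 | a, y₁) + OR(a,y) · f(R=0 | a, y₁) ) for all values a, y, z with positive joint probability. -/

import Mathlib

open Finset

variable {A Y Z : Type} [Fintype A] [Fintype Y] [Fintype Z]

/-- Marginal mass `f(a, y)` of the joint mass function `f` on `(A, Y, Z, R)`,
with `R` encoded by `Bool` (`true` meaning `R = 1`). -/
noncomputable def mAY (f : A → Y → Z → Bool → ℝ) (a : A) (y : Y) : ℝ :=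
  ∑ z, ∑ r, f a y z r

/-- Marginal mass `f(a, y, z)`. -/
noncomputable def mAYZ (f : A → Y → Z → Bool → ℝ) (a : A) (y : Y) (z : Z) : ℝ :=
  ∑ r, f a y z r

/-- Marginal mass `f(a, y, r)`. -/
noncomputable def mAYR (f : A → Y → Z → Bool → ℝ) (a : A) (y : Y) (r : Bool) : ℝ :=
  ∑ z, f a y z r

/-- Marginal mass `f(a)`. -/
noncomputable def mA (f : A → Y → Z → Bool → ℝ) (a : A) : ℝ :=
  ∑ y, ∑ z, ∑ r, f a y z r

/-- Marginal mass `f(a, r)`. -/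
noncomputable def mAR (f : A → Y → Z → Bool → ℝ) (a : A) (r : Bool) : ℝ :=
  ∑ y, ∑ z, f a y z r

/-- Marginal mass `f(a, z)`. -/
noncomputable def mAZ (f : A → Y → Z → Bool → ℝ) (a : A) (z : Z) : ℝ :=
  ∑ y, ∑ r, f a y z r

/-- Marginal mass `f(a, z, r)`. -/
noncomputable def mAZR (f : A → Y → Z → Bool → ℝ) (a : A) (z : Z) (r : Bool) : ℝ :=
  ∑ y, f a y z r

/-- The shadow-variable assumption (a): the conditional independence `Z ⟂ R | (Y, A)`,
expressed via joint masses as `f(a,y,z,r) · f(a,y) = f(a,y,z) · f(a,y,r)`,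
i.e. `f(z, r | y, a) = f(z | y, a) · f(r | y, a)`. -/
def CondIndepZR (f : A → Y → Z → Bool → ℝ) : Prop :=
  ∀ (a : A) (y : Y) (z : Z) (r : Bool),
    f a y z r * mAY f a y = mAYZ f a y z * mAYR f a y r

/-- The odds-ratio function
`OR(a,y) = [f(R=0 | a, y) · f(R=1 | a, y₁)] / [f(R=1 | a, y) · f(R=0 | a, y₁)]`,
with reference value `y₁`. -/
noncomputable def OddsRatio (f : A → Y → Z → Bool → ℝ) (y₁ : Y) (a : A) (y : Y) : ℝ :=
  ((mAYR f a y false / mAY f a y) * (mAYR f a y₁ true / mAY f a y₁)) /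
    ((mAYR f a y true / mAY f a y) * (mAYR f a y₁ false / mAY f a y₁))

/-- equation (3.7): under the shadow-variable conditional independence
`Z ⟂ R | (Y, A)`, the propensity score satisfies
`f(R=1 | a, y) = f(R=1 | a, y, z)` and
`f(R=1 | a, y) = f(R=1 | a, y₁) / (f(R=1 | a, y₁) + OR(a,y) · f(R=0 | a, y₁))`. -/
theorem propensity_score_of_condIndep
    (f : A → Y → Z → Bool → ℝ)
    (hpos : ∀ (a : A) (y : Y) (z : Z) (r : Bool), 0 < f a y z r)
    (hsum : ∑ a, ∑ y, ∑ z, ∑ r, f a y z r = 1)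
    (hci : CondIndepZR f) (y₁ : Y) :
    ∀ (a : A) (y : Y) (z : Z),
      mAYR f a y true / mAY f a y = f a y z true / mAYZ f a y z ∧
      mAYR f a y true / mAY f a y =
        (mAYR f a y₁ true / mAY f a y₁) /
          ((mAYR f a y₁ true / mAY f a y₁) +
            OddsRatio f y₁ a y * (mAYR f a y₁ false / mAY f a y₁)) := by
  intro a y z
  have hR : ∀ (y : Y) (r : Bool), 0 < mAYR f a y r := fun y r =>
    Finset.sum_pos (fun z _ => hpos a y z r) ⟨z, Finset.mem_univ z⟩
  have hAY : ∀ (y : Y), 0 < mAY f a y := fun y =>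
    Finset.sum_pos (fun z _ => Finset.sum_pos (fun r _ => hpos a y z r) ⟨true, Finset.mem_univ _⟩)
      ⟨z, Finset.mem_univ z⟩
  have hAYZ : 0 < mAYZ f a y z :=
    Finset.sum_pos (fun r _ => hpos a y z r) ⟨true, Finset.mem_univ _⟩
  have hkey : ∀ (y : Y), mAY f a y = mAYR f a y true + mAYR f a y false := by
    intro y
    simp only [mAY, mAYR, Fintype.sum_bool]
    rw [Finset.sum_add_distrib]
  constructor
  · have h := hci a y z true
    rw [div_eq_div_iff (hAY y).ne' hAYZ.ne']
    linarith
  · have hOR : 0 < OddsRatio f y₁ a y :=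
      div_pos (mul_pos (div_pos (hR y false) (hAY y)) (div_pos (hR y₁ true) (hAY y₁)))
        (mul_pos (div_pos (hR y true) (hAY y)) (div_pos (hR y₁ false) (hAY y₁)))
    have hden : 0 < (mAYR f a y₁ true / mAY f a y₁) +
        OddsRatio f y₁ a y * (mAYR f a y₁ false / mAY f a y₁) :=
      add_pos (div_pos (hR y₁ true) (hAY y₁)) (mul_pos hOR (div_pos (hR y₁ false) (hAY y₁)))
    have h1 := (hR y true).ne'
    have h0 := (hR y false).ne'
    have g1 := (hR y₁ true).ne'
    have g0 := (hR y₁ false).ne'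
    have hy := (hAY y).ne'
    have hy1 := (hAY y₁).ne'
    rw [div_eq_div_iff (hAY y).ne' hden.ne', OddsRatio]
    field_simp
    linear_combination (-1 : ℝ) * (hkey y)
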